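/- Let M ⊆ S = K[x,y] be a monomial ideal of finite colength (for a grading by coprime positive integers a, b). Fix k ≥ 1 and a positive significant arrow (i, ℓ') ∈ T⁺(M). Then there is at most one ℓ ≥ 1 such that a direct path p_{k,ℓ} from m_k of length ℓ exists in which (i, ℓ') is the last step, in the sense that every other arrow (i'', ℓ'') appearing in p_{k,ℓ} satisfies i'' > i. -/

import Mathlib

/-!
Combinatorial framework for monomial ideals in `K[x,y]`, graded by
`deg x = a`, `deg y = b`.  A monomial `x^α y^β` is represented by the
pair `(α, β) : ℤ × ℤ`; it lies in `S = K[x,y]` when both entries are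
nonnegative.
-/

namespace MonId

/-- A (Laurent) monomial `x^α y^β`, represented by its exponent vector. -/
abbrev Mon : Type := ℤ × ℤ

/-- `p` is a genuine monomial of `S = K[x,y]` (nonnegative exponents). -/
def inS (p : Mon) : Prop := 0 ≤ p.1 ∧ 0 ≤ p.2

/-- `M` is (the set of monomials of) a monomial ideal of `S` of finite
colength: it consists of monomials of `S`, is closed under multiplication
by `x` and by `y`, and its complement in the monomials of `S` is finite. -/
def IsMonIdeal (M : Set Mon) : Prop :=
  (∀ p ∈ M, inS p) ∧
  (∀ p ∈ M, (p.1 + 1, p.2) ∈ M ∧ (p.1, p.2 + 1) ∈ M) ∧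
  {p : Mon | inS p ∧ p ∉ M}.Finite

/-- `p` is a minimal monomial generator of the monomial ideal `M`. -/
def IsMinGen (M : Set Mon) (p : Mon) : Prop :=
  p ∈ M ∧ (p.1 - 1, p.2) ∉ M ∧ (p.1, p.2 - 1) ∉ M

/-- `m 0, m 1, …, m e` is the list of minimal generators of `M`, in
increasing lexicographic order `≺` with `x ≺ y` (equivalently, with
strictly increasing `y`-exponents). -/
def IsGenSeq (M : Set Mon) (e : ℕ) (m : ℕ → Mon) : Prop :=
  (∀ k ≤ e, IsMinGen M (m k)) ∧
  (∀ k, k < e → (m k).2 < (m (k + 1)).2) ∧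
  (∀ p, IsMinGen M p → ∃ k ≤ e, m k = p)

/-- Multiplication of the monomial `p` by `r^ℓ`, where `r = x^b y^{-a}`. -/
def rpow (a b ℓ : ℤ) (p : Mon) : Mon := (p.1 + b * ℓ, p.2 - a * ℓ)

/-- `w m i` is `w_i = lcm(m_{i-1}, m_i)` (componentwise max of exponents). -/
def w (m : ℕ → Mon) (i : ℕ) : Mon :=
  (max (m (i - 1)).1 (m i).1, max (m (i - 1)).2 (m i).2)

/-- The set `T⁺(M)` of positive significant arrows `(i, ℓ)`:
`1 ≤ i ≤ e`, `ℓ ≥ 1`, `m_i r^ℓ ∈ S ∖ M` and `w_i r^ℓ ∈ M`. -/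
def Tplus (a b : ℤ) (M : Set Mon) (e : ℕ) (m : ℕ → Mon) : Set (ℕ × ℤ) :=
  {q | 1 ≤ q.1 ∧ q.1 ≤ e ∧ 1 ≤ q.2 ∧ inS (rpow a b q.2 (m q.1)) ∧
    rpow a b q.2 (m q.1) ∉ M ∧ rpow a b q.2 (w m q.1) ∈ M}

/-- The set `T⁻(M)` of negative significant arrows `(i, ℓ)`:
`0 ≤ i ≤ e - 1`, `ℓ ≤ -1`, `m_i r^ℓ ∈ S ∖ M` and `w_{i+1} r^ℓ ∈ M`. -/
def Tminus (a b : ℤ) (M : Set Mon) (e : ℕ) (m : ℕ → Mon) : Set (ℕ × ℤ) :=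
  {q | q.1 < e ∧ q.2 ≤ -1 ∧ inS (rpow a b q.2 (m q.1)) ∧
    rpow a b q.2 (m q.1) ∉ M ∧ rpow a b q.2 (w m (q.1 + 1)) ∈ M}

/-- `j⁺(p) = max {i : m_i divides p}`. -/
def jplus (e : ℕ) (m : ℕ → Mon) (p : Mon) : ℕ :=
  Nat.findGreatest (fun i => (m i).1 ≤ p.1 ∧ (m i).2 ≤ p.2) e

/-- `j⁻(p) = min {i : m_i divides p}`. -/
noncomputable def jminus (e : ℕ) (m : ℕ → Mon) (p : Mon) : ℕ :=
  sInf {i | i ≤ e ∧ (m i).1 ≤ p.1 ∧ (m i).2 ≤ p.2}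

/-- `IsPath a b M e m i P`: `P` is a path from the generator `m_i`, i.e. a
finite sequence of positive significant arrows whose first arrow `(i₁, ℓ₁)`
has `i₁ ≤ i`, and whose tail is a path from `m_{j⁺(w_{i₁} r^{ℓ₁})}`.
The empty sequence is a path from every generator. -/
def IsPath (a b : ℤ) (M : Set Mon) (e : ℕ) (m : ℕ → Mon) : ℕ → List (ℕ × ℤ) → Prop
  | _, [] => True
  | i, q :: rest => q ∈ Tplus a b M e m ∧ q.1 ≤ i ∧
      IsPath a b M e m (jplus e m (rpow a b q.2 (w m q.1))) rest

/-- The length `l(P) = ℓ₁ + ⋯ + ℓ_s` of a path. -/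
def llen (P : List (ℕ × ℤ)) : ℤ := (P.map Prod.snd).sum

/-- `lm j` is the largest `ℓ` with `(j, ℓ) ∈ T⁺(M)`, and is `0` when no
such arrow exists. -/
def IsLmax (Tp : Set (ℕ × ℤ)) (lm : ℕ → ℤ) : Prop :=
  ∀ j : ℕ, (∀ ℓ : ℤ, (j, ℓ) ∈ Tp → ℓ ≤ lm j) ∧
    ((∃ ℓ : ℤ, (j, ℓ) ∈ Tp) → (j, lm j) ∈ Tp) ∧
    ((¬ ∃ ℓ : ℤ, (j, ℓ) ∈ Tp) → lm j = 0)

/-- `IsZSeq a b e m lm k L`: `L` is the sequence `(z_1, z_2, …)` of arrows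
produced by the greedy procedure started at index `k`: while `i ≥ 1`, if
`ℓ_i > 0` record the arrow `(i, ℓ_i)` and jump to `j⁺(w_i r^{ℓ_i})`,
otherwise decrease `i` by one; stop when `i ≤ 0`. -/
inductive IsZSeq (a b : ℤ) (e : ℕ) (m : ℕ → Mon) (lm : ℕ → ℤ) : ℕ → List (ℕ × ℤ) → Prop where
  | zero : IsZSeq a b e m lm 0 []
  | skip {i : ℕ} {L : List (ℕ × ℤ)} : 1 ≤ i → lm i ≤ 0 →
      IsZSeq a b e m lm (i - 1) L → IsZSeq a b e m lm i L
  | step {i : ℕ} {L : List (ℕ × ℤ)} : 1 ≤ i → 0 < lm i →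
      IsZSeq a b e m lm (jplus e m (rpow a b (lm i) (w m i))) L →
      IsZSeq a b e m lm i ((i, lm i) :: L)

/-- `D` is a direct path from `m_k`: a path which is either a nonempty
initial segment `(z_1, …, z_s)` of the greedy sequence from `k`, or
`(z_1, …, z_s, (i', ℓ'))` where `i'` is the index of `z_{s+1}` and
`1 ≤ ℓ' < ℓ_{i'}`. -/
def IsDirectPath (a b : ℤ) (M : Set Mon) (e : ℕ) (m : ℕ → Mon) (lm : ℕ → ℤ)
    (k : ℕ) (D : List (ℕ × ℤ)) : Prop :=
  IsPath a b M e m k D ∧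
  ∃ L, IsZSeq a b e m lm k L ∧
    ((∃ s : ℕ, 0 < s ∧ s ≤ L.length ∧ D = L.take s) ∨
     (∃ (s : ℕ) (z : ℕ × ℤ) (ℓ' : ℤ), L[s]? = some z ∧ 1 ≤ ℓ' ∧ ℓ' < z.2 ∧
       D = L.take s ++ [(z.1, ℓ')]))

/-- The monomial `c_P = c_{i₁}^{ℓ₁} ⋯ c_{i_s}^{ℓ_s}` associated to a path,
as an element of the polynomial ring with variables `c_i^ℓ` (indexed by
pairs `(i, ℓ)`). -/
noncomputable def cP (K : Type*) [CommSemiring K] (P : List (ℕ × ℤ)) : MvPolynomial (ℕ × ℤ) K :=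
  (P.map MvPolynomial.X).prod

end MonId

open MonId

section Aux

variable (a b : ℤ) (e : ℕ) (m : ℕ → Mon) (lm : ℕ → ℤ)

private lemma mono_snd (h2 : ∀ k, k < e → (m k).2 < (m (k + 1)).2) :
    ∀ p q : ℕ, p ≤ q → q ≤ e → (m p).2 ≤ (m q).2 := by
  intro p q hpq hqe
  induction q with
  | zero => have hp : p = 0 := by omega
            simp [hp]
  | succ n ih =>
      rcases Nat.lt_or_ge p (n+1) with h | h
      · have := h2 n (by omega)
        have := ih (by omega) (by omega)
        omega
      · have : p = n + 1 := by omega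
        simp [this]

private lemma jplus_lt (ha : 1 ≤ a) (h2 : ∀ k, k < e → (m k).2 < (m (k + 1)).2)
    {i : ℕ} {ℓ : ℤ} (h1 : 1 ≤ i) (hie : i ≤ e) (hl : 1 ≤ ℓ) :
    jplus e m (rpow a b ℓ (w m i)) < i := by
  by_contra hcon
  push_neg at hcon
  set P : ℕ → Prop := fun j => (m j).1 ≤ (rpow a b ℓ (w m i)).1 ∧
      (m j).2 ≤ (rpow a b ℓ (w m i)).2 with hP
  have hje : Nat.findGreatest P e ≤ e := Nat.findGreatest_le e
  have hne : Nat.findGreatest P e ≠ 0 := by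
    have : i ≤ Nat.findGreatest P e := hcon
    omega
  have hspec : P (Nat.findGreatest P e) := (Nat.findGreatest_eq_iff.1 rfl).2.1 hne
  set j := Nat.findGreatest P e with hj
  have hmij : (m i).2 ≤ (m j).2 := mono_snd e m h2 i j hcon hje
  have hwi : (w m i).2 ≤ (m i).2 := by
    have : (m (i - 1)).2 ≤ (m i).2 := mono_snd e m h2 (i-1) i (by omega) hie
    simp only [w]
    omega
  have hbound : (m j).2 ≤ (w m i).2 - a * ℓ := hspec.2
  have hpos : 0 < a * ℓ := mul_pos (by omega) (by omega)
  omega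

private lemma lm_mem (hlm : IsLmax (Tplus a b M e m) lm) {i : ℕ} (h : 0 < lm i) :
    (i, lm i) ∈ Tplus a b M e m := by
  rcases hlm i with ⟨_, h2, h3⟩
  by_cases hex : ∃ ℓ : ℤ, (i, ℓ) ∈ Tplus a b M e m
  · exact h2 hex
  · exact absurd (h3 hex) (by omega)

private lemma zseq_unique {k : ℕ} {L1 : List (ℕ × ℤ)}
    (h1 : IsZSeq a b e m lm k L1) : ∀ {L2}, IsZSeq a b e m lm k L2 → L1 = L2 := by
  induction h1 with
  | zero =>
      intro L2 h2
      cases h2 with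
      | zero => rfl
      | skip hi _ _ => omega
      | step hi _ _ => omega
  | skip hi hl _ ih =>
      intro L2 h2
      cases h2 with
      | zero => omega
      | skip _ _ h => exact ih h
      | step _ hl' _ => omega
  | step hi hl _ ih =>
      intro L2 h2
      cases h2 with
      | zero => omega
      | skip _ hl' _ => omega
      | step _ _ h => rw [ih h]

private lemma zseq_struct {M : Set Mon} (ha : 1 ≤ a)
    (h2 : ∀ k, k < e → (m k).2 < (m (k + 1)).2)
    (hlm : IsLmax (Tplus a b M e m) lm) {k : ℕ} {L : List (ℕ × ℤ)}
    (h : IsZSeq a b e m lm k L) :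
    List.Pairwise (fun p q : ℕ × ℤ => q.1 < p.1) L ∧
      ∀ q ∈ L, q.2 = lm q.1 ∧ q.1 ≤ k := by
  induction h with
  | zero => simp
  | skip hi hl hL ih =>
      refine ⟨ih.1, fun q hq => ?_⟩
      have := ih.2 q hq
      exact ⟨this.1, by omega⟩
  | step hi hl hL ih =>
      rename_i i L
      have harr := lm_mem a b e m lm hlm hl
      have hie : i ≤ e := harr.2.1
      have hlml : 1 ≤ lm i := harr.2.2.1
      have hjlt : jplus e m (rpow a b (lm i) (w m i)) < i :=
        jplus_lt a b e m ha h2 hi hie hlml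
      constructor
      · refine List.Pairwise.cons (fun q hq => ?_) ih.1
        have := (ih.2 q hq).2
        omega
      · intro q hq
        rcases List.mem_cons.1 hq with hq | hq
        · subst hq; exact ⟨rfl, le_rfl⟩
        · have := ih.2 q hq
          exact ⟨this.1, by omega⟩

private lemma mem_take_of_lt {α : Type*} {L : List α} {n s : ℕ}
    (hn : n < L.length) (h : n < s) : L[n] ∈ L.take s := by
  have h2 : (L.take s)[n]? = some L[n] := by
    simp [List.getElem?_take, h, List.getElem?_eq_getElem hn]
  exact List.mem_of_getElem? h2

private lemma direct_canon {L D : List (ℕ × ℤ)} {lm : ℕ → ℤ}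
    (hpair : List.Pairwise (fun p q : ℕ × ℤ => q.1 < p.1) L)
    (hsnd : ∀ q ∈ L, q.2 = lm q.1)
    {i : ℕ} {ℓ' : ℤ}
    (hD : (∃ s : ℕ, 0 < s ∧ s ≤ L.length ∧ D = L.take s) ∨
      (∃ (s : ℕ) (z : ℕ × ℤ) (ℓ'' : ℤ), L[s]? = some z ∧ 1 ≤ ℓ'' ∧ ℓ'' < z.2 ∧
        D = L.take s ++ [(z.1, ℓ'')]))
    (hmem : (i, ℓ') ∈ D)
    (hlast : ∀ q ∈ D, q ≠ (i, ℓ') → i < q.1) :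
    ∃ p : ℕ, ∃ hp : p < L.length, L[p] = (i, lm i) ∧
      ((ℓ' = lm i ∧ D = L.take (p + 1)) ∨ (ℓ' < lm i ∧ D = L.take p ++ [(i, ℓ')])) := by
  have hPW := List.pairwise_iff_getElem.1 hpair
  rcases hD with ⟨s, hs0, hsl, rfl⟩ | ⟨s, z, ℓ'', hz, hl1, hl2, rfl⟩
  · -- form 1 : D = L.take s
    obtain ⟨n, hn, he⟩ := List.mem_iff_getElem.1 hmem
    have hns : n < s := by
      have := hn; simp [List.length_take] at this; omega
    have hnL : n < L.length := by
      have := hn; simp [List.length_take] at this; omega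
    have heL : L[n] = (i, ℓ') := by
      rw [← he]; simp [List.getElem_take]
    have hmemL : (i, ℓ') ∈ L := by
      rw [← heL]; exact List.getElem_mem hnL
    have hℓ : ℓ' = lm i := hsnd _ hmemL
    have hsn : s = n + 1 := by
      by_contra hcon
      have hlt : n + 1 < s := by omega
      have hn1L : n + 1 < L.length := by omega
      have hqmem : L[n+1] ∈ L.take s := mem_take_of_lt hn1L hlt
      have hql : (L[n+1]).1 < (L[n]).1 := hPW n (n+1) hnL hn1L (by omega)
      rw [heL] at hql
      have hne : L[n+1] ≠ (i, ℓ') := by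
        intro hEq; rw [hEq] at hql; exact lt_irrefl _ hql
      exact absurd (hlast _ hqmem hne) (by omega)
    refine ⟨n, hnL, by rw [heL, hℓ], Or.inl ⟨hℓ, by rw [hsn]⟩⟩
  · -- form 2 : D = L.take s ++ [(z.1, ℓ'')]
    obtain ⟨hsL, hzs⟩ := List.getElem?_eq_some_iff.1 hz
    have hzmem : z ∈ L := by rw [← hzs]; exact List.getElem_mem hsL
    have hzsnd : z.2 = lm z.1 := hsnd _ hzmem
    rcases List.mem_append.1 hmem with hm | hm
    · -- (i, ℓ') in the prefix : impossible
      exfalso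
      obtain ⟨n, hn, he⟩ := List.mem_iff_getElem.1 hm
      have hns : n < s := by
        have := hn; simp [List.length_take] at this; omega
      have hnL : n < L.length := by
        have := hn; simp [List.length_take] at this; omega
      have heL : L[n] = (i, ℓ') := by
        rw [← he]; simp [List.getElem_take]
      have hmemL : (i, ℓ') ∈ L := by
        rw [← heL]; exact List.getElem_mem hnL
      have hℓ : ℓ' = lm i := hsnd _ hmemL
      have hzi : z.1 < i := by
        have := hPW n s hnL hsL hns
        rw [heL, hzs] at this; exact this
      have hqmem : (z.1, ℓ'') ∈ L.take s ++ [(z.1, ℓ'')] := by simp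
      have hne : (z.1, ℓ'') ≠ (i, ℓ') := by
        intro hEq
        have h1 : z.1 = i := congrArg Prod.fst hEq
        have h2 : ℓ'' = ℓ' := congrArg Prod.snd hEq
        rw [h1] at hzsnd; omega
      exact absurd (hlast _ hqmem hne) (by omega)
    · -- (i, ℓ') is the appended arrow
      have hEq : (z.1, ℓ'') = (i, ℓ') := by
        have := List.mem_singleton.1 hm
        exact this.symm
      have h1 : z.1 = i := congrArg Prod.fst hEq
      have h2 : ℓ'' = ℓ' := congrArg Prod.snd hEq
      have hzL : L[s] = (i, lm i) := by
        rw [hzs]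
        have : z = (z.1, z.2) := rfl
        rw [this, h1, hzsnd, h1]
      refine ⟨s, hsL, hzL, Or.inr ⟨by rw [← h2, ← h1, ← hzsnd]; exact hl2, by rw [h1, h2]⟩⟩

end Aux

/-- Remark `rem:PropertiesOfDirectPaths` (2).  For a
fixed `k ≥ 1` and a fixed positive significant arrow `(i, ℓ')` of the
monomial ideal `M`, there is at most one `ℓ ≥ 1` such that there is a
direct path `p_{k,ℓ}` from `m_k` of length `ℓ` in which `(i, ℓ')` is the
last step, in the sense that every other arrow `(i'', ℓ'')` appearing in
`p_{k,ℓ}` has `i'' > i`. -/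
theorem directPath_lastStep_unique_length
    (a b : ℤ) (ha : 1 ≤ a) (hb : 1 ≤ b) (hab : IsCoprime a b)
    (M : Set Mon) (hM : IsMonIdeal M) (e : ℕ) (m : ℕ → Mon)
    (hg : IsGenSeq M e m)
    (lm : ℕ → ℤ) (hlm : IsLmax (Tplus a b M e m) lm)
    (k : ℕ) (hk1 : 1 ≤ k) (hke : k ≤ e)
    (i : ℕ) (ℓ' : ℤ) (harrow : (i, ℓ') ∈ Tplus a b M e m)
    (ℓ₁ ℓ₂ : ℤ) (hℓ₁ : 1 ≤ ℓ₁) (hℓ₂ : 1 ≤ ℓ₂)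
    (h₁ : ∃ P : List (ℕ × ℤ), IsDirectPath a b M e m lm k P ∧ llen P = ℓ₁ ∧
      (i, ℓ') ∈ P ∧ ∀ q ∈ P, q ≠ (i, ℓ') → i < q.1)
    (h₂ : ∃ P : List (ℕ × ℤ), IsDirectPath a b M e m lm k P ∧ llen P = ℓ₂ ∧
      (i, ℓ') ∈ P ∧ ∀ q ∈ P, q ≠ (i, ℓ') → i < q.1) :
    ℓ₁ = ℓ₂ := by
  obtain ⟨P₁, ⟨hpath₁, L₁, hz₁, hform₁⟩, hlen₁, hmem₁, hlast₁⟩ := h₁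
  obtain ⟨P₂, ⟨hpath₂, L₂, hz₂, hform₂⟩, hlen₂, hmem₂, hlast₂⟩ := h₂
  have hLeq : L₁ = L₂ := zseq_unique a b e m lm hz₁ hz₂
  subst hLeq
  obtain ⟨hpair, hmeml⟩ := zseq_struct a b e m lm ha hg.2.1 hlm hz₁
  have hsnd : ∀ q ∈ L₁, q.2 = lm q.1 := fun q hq => (hmeml q hq).1
  obtain ⟨p₁, hp₁, hLp₁, hbr₁⟩ := direct_canon hpair hsnd hform₁ hmem₁ hlast₁
  obtain ⟨p₂, hp₂, hLp₂, hbr₂⟩ := direct_canon hpair hsnd hform₂ hmem₂ hlast₂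
  have hPW := List.pairwise_iff_getElem.1 hpair
  have hpeq : p₁ = p₂ := by
    rcases lt_trichotomy p₁ p₂ with h | h | h
    · have := hPW p₁ p₂ hp₁ hp₂ h
      rw [hLp₁, hLp₂] at this; exact absurd this (lt_irrefl _)
    · exact h
    · have := hPW p₂ p₁ hp₂ hp₁ h
      rw [hLp₁, hLp₂] at this; exact absurd this (lt_irrefl _)
  subst hpeq
  have hPeq : P₁ = P₂ := by
    rcases hbr₁ with ⟨he₁, hD₁⟩ | ⟨he₁, hD₁⟩ <;> rcases hbr₂ with ⟨he₂, hD₂⟩ | ⟨he₂, hD₂⟩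
    · rw [hD₁, hD₂]
    · omega
    · omega
    · rw [hD₁, hD₂]
  rw [← hlen₁, ← hlen₂, hPeq]
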